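/- Let P be a partial latin square of order n whose filled cells all lie in the upper-left r×s rectangle R, with every cell of R filled except possibly at most one empty cell per column of R. Let J be a subset of these empty cells, H the set of cells in the top r rows, ν(σ) the number of occurrences of σ in R, and ρ(σ) the number of rows containing an empty cell of R∖J that supports σ. Then α(σ,H∖J) = min{r, ν(σ)+ρ(σ)+n−s}. -/

import Mathlib

open scoped Classical

section PLS

variable {n : ℕ}

/-- A partial latin square of order `n`: an `n × n` array of optional symbols,
no symbol occurring twice in any row or column. -/
def IsPLS (n : ℕ) (P : Fin n → Fin n → Option (Fin n)) : Prop :=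
  (∀ i j j' σ, P i j = some σ → P i j' = some σ → j = j') ∧
  (∀ i i' j σ, P i j = some σ → P i' j = some σ → i = i')

/-- `σ` is missing from row `i`. -/
def MissingRow (P : Fin n → Fin n → Option (Fin n)) (σ i : Fin n) : Prop :=
  ∀ j, P i j ≠ some σ

/-- `σ` is missing from column `j`. -/
def MissingCol (P : Fin n → Fin n → Option (Fin n)) (σ j : Fin n) : Prop :=
  ∀ i, P i j ≠ some σ

/-- A cell supports `σ` if it contains `σ`, or is empty and `σ` is missing from
its row and column. -/
def Supports (P : Fin n → Fin n → Option (Fin n)) (σ : Fin n) (c : Fin n × Fin n) : Prop :=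
  P c.1 c.2 = some σ ∨ (P c.1 c.2 = none ∧ MissingRow P σ c.1 ∧ MissingCol P σ c.2)

/-- A set of cells is independent if no two share a row or a column. -/
def IndepCells (S : Finset (Fin n × Fin n)) : Prop :=
  ∀ c ∈ S, ∀ c' ∈ S, c ≠ c' → c.1 ≠ c'.1 ∧ c.2 ≠ c'.2

/-- `alpha P σ T` : max size of an independent subset of `T` all of whose cells support `σ`. -/
noncomputable def alpha (P : Fin n → Fin n → Option (Fin n)) (σ : Fin n)
    (T : Finset (Fin n × Fin n)) : ℕ :=
  (T.powerset.filter (fun S => IndepCells S ∧ ∀ c ∈ S, Supports P σ c)).sup Finset.card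

/-- Hall's Condition: every set of cells satisfies the Hall Inequality. -/
def HallCond (n : ℕ) (P : Fin n → Fin n → Option (Fin n)) : Prop :=
  ∀ T : Finset (Fin n × Fin n), T.card ≤ ∑ σ : Fin n, alpha P σ T

/-- A latin square of order `n`. -/
def IsLatin (n : ℕ) (L : Fin n → Fin n → Fin n) : Prop :=
  (∀ i, Function.Injective (L i)) ∧ (∀ j, Function.Injective fun i => L i j)

/-- `L` is a completion of `P`. -/
def Completes (n : ℕ) (P : Fin n → Fin n → Option (Fin n)) (L : Fin n → Fin n → Fin n) : Prop :=
  IsLatin n L ∧ ∀ i j σ, P i j = some σ → L i j = σ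

end PLS

private lemma card_filter_val_lt {n : ℕ} (r : ℕ) (hrn : r ≤ n) :
    ((Finset.univ : Finset (Fin n)).filter (fun i => i.val < r)).card = r := by
  rw [← Finset.card_range r]
  apply Finset.card_bij (fun i _ => i.val)
  · intro a ha; simp at ha ⊢; omega
  · intro a _ b _ h; exact Fin.ext h
  · intro b hb; simp at hb; exact ⟨⟨b, lt_of_lt_of_le hb hrn⟩, by simp [hb], rfl⟩

private lemma card_filter_val_ge {n : ℕ} (s : ℕ) :
    ((Finset.univ : Finset (Fin n)).filter (fun j => s ≤ j.val)).card = n - s := by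
  rw [← Nat.card_Ico s n]
  apply Finset.card_bij (fun j _ => j.val)
  · intro a ha; simp at ha ⊢; omega
  · intro a _ b _ h; exact Fin.ext h
  · intro b hb; simp at hb ⊢; exact ⟨⟨b, hb.2⟩, hb.1, rfl⟩

theorem stmt8 (n r s : ℕ) (hr : 1 ≤ r) (hrn : r ≤ n) (hs : 1 ≤ s) (hsn : s ≤ n)
    (P : Fin n → Fin n → Option (Fin n)) (hP : IsPLS n P)
    (hshape1 : ∀ i j : Fin n, P i j ≠ none → i.val < r ∧ j.val < s)
    (hshape2 : ∀ j : Fin n, j.val < s →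
      (Finset.univ.filter (fun i : Fin n => i.val < r ∧ P i j = none)).card ≤ 1)
    (B : Finset (Fin n × Fin n))
    (hB : B = Finset.univ.filter
      (fun c : Fin n × Fin n => c.1.val < r ∧ c.2.val < s ∧ P c.1 c.2 = none))
    (J : Finset (Fin n × Fin n)) (hJ : J ⊆ B)
    (H : Finset (Fin n × Fin n))
    (hH : H = Finset.univ.filter (fun c : Fin n × Fin n => c.1.val < r))
    (σ : Fin n) (ν ρ : ℕ)
    (hν : ν = (Finset.univ.filter
      (fun c : Fin n × Fin n => P c.1 c.2 = some σ)).card)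
    (hρ : ρ = (Finset.univ.filter
      (fun i : Fin n => ∃ c ∈ B \ J, c.1 = i ∧ Supports P σ c)).card) :
    alpha P σ (H \ J) = min r (ν + ρ + (n - s)) := by
  classical
  -- basic shape facts
  have hnone_col : ∀ i j : Fin n, s ≤ j.val → P i j = none := by
    intro i j hj
    by_contra h
    exact absurd (hshape1 i j h).2 (by omega)
  have hBmem : ∀ c : Fin n × Fin n,
      c ∈ B ↔ c.1.val < r ∧ c.2.val < s ∧ P c.1 c.2 = none := by
    intro c; rw [hB]; simp
  have hHmem : ∀ c : Fin n × Fin n, c ∈ H ↔ c.1.val < r := by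
    intro c; rw [hH]; simp
  -- A1 : cells containing σ
  set A1 : Finset (Fin n × Fin n) :=
    Finset.univ.filter (fun c => P c.1 c.2 = some σ) with hA1
  have hA1mem : ∀ c : Fin n × Fin n, c ∈ A1 ↔ P c.1 c.2 = some σ := by
    intro c; simp [hA1]
  have hA1card : A1.card = ν := hν.symm
  have hfst1 : ∀ c ∈ A1, ∀ c' ∈ A1, c.1 = c'.1 → c = c' := by
    intro c hc c' hc' h
    rw [hA1mem] at hc hc'
    have h2 : P c.1 c'.2 = some σ := by rw [h]; exact hc'
    exact Prod.ext h (hP.1 c.1 c.2 c'.2 σ hc h2)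
  set Rows1 := A1.image Prod.fst with hR1
  have hRows1card : Rows1.card = ν := by
    rw [hR1, Finset.card_image_of_injOn, hA1card]
    intro c hc c' hc' h
    exact hfst1 c (Finset.mem_coe.mp hc) c' (Finset.mem_coe.mp hc') h
  have hRows1mem : ∀ i : Fin n, i ∈ Rows1 ↔ ∃ j, P i j = some σ := by
    intro i
    constructor
    · intro hi
      rw [hR1, Finset.mem_image] at hi
      obtain ⟨c, hc, rfl⟩ := hi
      exact ⟨c.2, (hA1mem c).mp hc⟩
    · intro ⟨j, hj⟩
      rw [hR1, Finset.mem_image]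
      exact ⟨(i, j), (hA1mem _).mpr hj, rfl⟩
  have hnotRows1 : ∀ i, i ∉ Rows1 → MissingRow P σ i := by
    intro i hi j hj
    exact hi ((hRows1mem i).mpr ⟨j, hj⟩)
  -- Rows2
  set Rows2 : Finset (Fin n) :=
    Finset.univ.filter (fun i => ∃ c ∈ B \ J, c.1 = i ∧ Supports P σ c) with hR2
  have hRows2card : Rows2.card = ρ := hρ.symm
  have hRows2mem : ∀ i : Fin n,
      i ∈ Rows2 ↔ ∃ c ∈ B \ J, c.1 = i ∧ Supports P σ c := by
    intro i; simp [hR2]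
  have hRows2missing : ∀ i ∈ Rows2, MissingRow P σ i := by
    intro i hi
    obtain ⟨c, hcBJ, rfl, hsup⟩ := (hRows2mem _).mp hi
    have hcB := (Finset.mem_sdiff.mp hcBJ).1
    have hnone := ((hBmem c).mp hcB).2.2
    rcases hsup with h | h
    · rw [hnone] at h; exact absurd h (by simp)
    · exact h.2.1
  have hdisj12 : Disjoint Rows1 Rows2 := by
    rw [Finset.disjoint_left]
    intro i h1 h2
    obtain ⟨j, hj⟩ := (hRows1mem i).mp h1
    exact hRows2missing i h2 j hj
  set RowsLt := Finset.univ.filter (fun i : Fin n => i.val < r) with hRL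
  have hRowsLtcard : RowsLt.card = r := by rw [hRL]; exact card_filter_val_lt r hrn
  have hRows1sub : Rows1 ⊆ RowsLt := by
    intro i hi
    obtain ⟨j, hj⟩ := (hRows1mem i).mp hi
    rw [hRL, Finset.mem_filter]
    exact ⟨Finset.mem_univ _, (hshape1 i j (by simp [hj])).1⟩
  have hRows2sub : Rows2 ⊆ RowsLt := by
    intro i hi
    obtain ⟨c, hcBJ, rfl, _⟩ := (hRows2mem _).mp hi
    have hcB := (Finset.mem_sdiff.mp hcBJ).1
    rw [hRL, Finset.mem_filter]
    exact ⟨Finset.mem_univ _, ((hBmem c).mp hcB).1⟩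
  have hνρ : ν + ρ ≤ r := by
    have h := Finset.card_le_card (Finset.union_subset hRows1sub hRows2sub)
    rw [Finset.card_union_of_disjoint hdisj12, hRows1card, hRows2card, hRowsLtcard] at h
    exact h
  set RowsRem := RowsLt \ (Rows1 ∪ Rows2) with hRRem
  have hRowsRemcard : RowsRem.card = r - (ν + ρ) := by
    rw [hRRem, Finset.card_sdiff_of_subset (Finset.union_subset hRows1sub hRows2sub),
      Finset.card_union_of_disjoint hdisj12, hRows1card, hRows2card, hRowsLtcard]
  set ColsGe := Finset.univ.filter (fun j : Fin n => s ≤ j.val) with hCG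
  have hColsGecard : ColsGe.card = n - s := by rw [hCG]; exact card_filter_val_ge s
  set k := min (r - (ν + ρ)) (n - s) with hk
  obtain ⟨R3, hR3sub, hR3card⟩ :=
    Finset.exists_subset_card_eq (show k ≤ RowsRem.card by rw [hRowsRemcard]; omega)
  obtain ⟨C3, hC3sub, hC3card⟩ :=
    Finset.exists_subset_card_eq (show k ≤ ColsGe.card by rw [hColsGecard]; omega)
  -- A2 : one supporting empty cell per row of Rows2
  have hch : ∀ i ∈ Rows2, ∃ c : Fin n × Fin n, c ∈ B \ J ∧ c.1 = i ∧ Supports P σ c := by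
    intro i hi
    exact (hRows2mem i).mp hi
  set g : {i // i ∈ Rows2} → Fin n × Fin n := fun x => (hch x.1 x.2).choose with hg
  have hgspec : ∀ x : {i // i ∈ Rows2},
      g x ∈ B \ J ∧ (g x).1 = x.1 ∧ Supports P σ (g x) := fun x => (hch x.1 x.2).choose_spec
  set A2 := Rows2.attach.image g with hA2
  have hA2card : A2.card = ρ := by
    rw [hA2, Finset.card_image_of_injOn, Finset.card_attach, hRows2card]
    intro x _ y _ h
    exact Subtype.ext (by rw [← (hgspec x).2.1, ← (hgspec y).2.1, h])
  have hA2mem : ∀ c ∈ A2, c ∈ B \ J ∧ c.1 ∈ Rows2 ∧ Supports P σ c := by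
    intro c hc
    rw [hA2, Finset.mem_image] at hc
    obtain ⟨x, _, rfl⟩ := hc
    exact ⟨(hgspec x).1, by rw [(hgspec x).2.1]; exact x.2, (hgspec x).2.2⟩
  have hfst2 : ∀ c ∈ A2, ∀ c' ∈ A2, c.1 = c'.1 → c = c' := by
    intro c hc c' hc' h
    rw [hA2, Finset.mem_image] at hc hc'
    obtain ⟨x, _, rfl⟩ := hc
    obtain ⟨y, _, rfl⟩ := hc'
    have hxy : x = y := Subtype.ext (by rw [← (hgspec x).2.1, ← (hgspec y).2.1, h])
    rw [hxy]
  have hA2facts : ∀ c ∈ A2, c.1.val < r ∧ c.2.val < s ∧ P c.1 c.2 = none ∧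
      MissingRow P σ c.1 ∧ MissingCol P σ c.2 ∧ c ∉ J := by
    intro c hc
    obtain ⟨hBJ, _, hsup⟩ := hA2mem c hc
    rw [Finset.mem_sdiff] at hBJ
    obtain ⟨hcB, hcJ⟩ := hBJ
    obtain ⟨h1, h2, h3⟩ := (hBmem c).mp hcB
    rcases hsup with h | h
    · rw [h3] at h; exact absurd h (by simp)
    · exact ⟨h1, h2, h3, h.2.1, h.2.2, hcJ⟩
  -- distinct columns in B
  have hBcol : ∀ c ∈ B, ∀ c' ∈ B, c.2 = c'.2 → c = c' := by
    intro c hc c' hc' h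
    obtain ⟨h1, h2, h3⟩ := (hBmem c).mp hc
    obtain ⟨h1', h2', h3'⟩ := (hBmem c').mp hc'
    have h3'' : P c'.1 c.2 = none := by rw [h]; exact h3'
    have hcard := hshape2 c.2 h2
    have hm1 : c.1 ∈ Finset.univ.filter (fun i : Fin n => i.val < r ∧ P i c.2 = none) := by
      simp [h1, h3]
    have hm2 : c'.1 ∈ Finset.univ.filter (fun i : Fin n => i.val < r ∧ P i c.2 = none) := by
      simp [h1', h3'']
    exact Prod.ext (Finset.card_le_one.mp hcard _ hm1 _ hm2) h
  -- A3
  set e := Finset.equivOfCardEq (hR3card.trans hC3card.symm) with he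
  set A3 := R3.attach.image (fun x => (x.1, (e x).1)) with hA3
  have hA3card : A3.card = k := by
    rw [hA3, Finset.card_image_of_injOn, Finset.card_attach, hR3card]
    intro x _ y _ h
    exact Subtype.ext (congrArg Prod.fst h)
  have hA3mem : ∀ c ∈ A3, c.1 ∈ R3 ∧ c.2 ∈ C3 := by
    intro c hc
    rw [hA3, Finset.mem_image] at hc
    obtain ⟨x, _, rfl⟩ := hc
    exact ⟨x.2, (e x).2⟩
  have hfst3 : ∀ c ∈ A3, ∀ c' ∈ A3, c.1 = c'.1 → c = c' := by
    intro c hc c' hc' h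
    rw [hA3, Finset.mem_image] at hc hc'
    obtain ⟨x, _, rfl⟩ := hc
    obtain ⟨y, _, rfl⟩ := hc'
    have hxy : x = y := Subtype.ext h
    rw [hxy]
  have hsnd3 : ∀ c ∈ A3, ∀ c' ∈ A3, c.2 = c'.2 → c = c' := by
    intro c hc c' hc' h
    rw [hA3, Finset.mem_image] at hc hc'
    obtain ⟨x, _, rfl⟩ := hc
    obtain ⟨y, _, rfl⟩ := hc'
    have hxy : x = y := e.injective (Subtype.ext h)
    rw [hxy]
  have hRowsRemFacts : ∀ i ∈ RowsRem, i.val < r ∧ i ∉ Rows1 ∧ i ∉ Rows2 := by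
    intro i hi
    rw [hRRem, Finset.mem_sdiff, Finset.mem_union] at hi
    refine ⟨?_, fun h => hi.2 (Or.inl h), fun h => hi.2 (Or.inr h)⟩
    have h := hi.1
    rw [hRL, Finset.mem_filter] at h
    exact h.2
  have hColsGeFacts : ∀ j ∈ ColsGe, s ≤ j.val := by
    intro j hj; rw [hCG, Finset.mem_filter] at hj; exact hj.2
  have hA3supp : ∀ c ∈ A3, Supports P σ c := by
    intro c hc
    obtain ⟨hi, hjC⟩ := hA3mem c hc
    have hj : s ≤ c.2.val := hColsGeFacts _ (hC3sub hjC)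
    have hiRem := hRowsRemFacts _ (hR3sub hi)
    right
    refine ⟨hnone_col _ _ hj, hnotRows1 _ hiRem.2.1, ?_⟩
    intro i' h
    rw [hnone_col i' c.2 hj] at h
    exact absurd h (by simp)
  -- the witness set
  set S := A1 ∪ A2 ∪ A3 with hS
  have hSmem : ∀ c : Fin n × Fin n, c ∈ S ↔ c ∈ A1 ∨ c ∈ A2 ∨ c ∈ A3 := by
    intro c; simp [hS, Finset.mem_union, or_assoc]
  have hrow1 : ∀ c ∈ A1, c.1 ∈ Rows1 := by
    intro c hc; rw [hR1, Finset.mem_image]; exact ⟨c, hc, rfl⟩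
  have hrow2 : ∀ c ∈ A2, c.1 ∈ Rows2 := fun c hc => (hA2mem c hc).2.1
  have hrow3 : ∀ c ∈ A3, c.1 ∈ RowsRem := fun c hc => hR3sub (hA3mem c hc).1
  have hSsub : S ⊆ H \ J := by
    intro c hc
    rw [Finset.mem_sdiff]
    rw [hSmem] at hc
    rcases hc with hc | hc | hc
    · have h1 := (hA1mem c).mp hc
      refine ⟨(hHmem c).mpr (hshape1 c.1 c.2 (by simp [h1])).1, fun hJc => ?_⟩
      have h2 := ((hBmem c).mp (hJ hJc)).2.2
      rw [h2] at h1
      exact absurd h1 (by simp)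
    · obtain ⟨h1, _, _, _, _, h6⟩ := hA2facts c hc
      exact ⟨(hHmem c).mpr h1, h6⟩
    · obtain ⟨hi, hjC⟩ := hA3mem c hc
      have hrem := hRowsRemFacts _ (hR3sub hi)
      refine ⟨(hHmem c).mpr hrem.1, fun hJc => ?_⟩
      have h2 := ((hBmem c).mp (hJ hJc)).2.1
      have h3 := hColsGeFacts _ (hC3sub hjC)
      omega
  have hfstS : ∀ c ∈ S, ∀ c' ∈ S, c.1 = c'.1 → c = c' := by
    intro c hc c' hc' h
    rw [hSmem] at hc hc'
    rcases hc with hc | hc | hc <;> rcases hc' with hc' | hc' | hc'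
    · exact hfst1 c hc c' hc' h
    · exact absurd (show c.1 ∈ Rows2 by rw [h]; exact hrow2 c' hc')
        (Finset.disjoint_left.mp hdisj12 (hrow1 c hc))
    · exact absurd (hrow1 c hc)
        (by rw [h]; exact (hRowsRemFacts _ (hrow3 c' hc')).2.1)
    · exact absurd (show c'.1 ∈ Rows2 by rw [← h]; exact hrow2 c hc)
        (Finset.disjoint_left.mp hdisj12 (hrow1 c' hc'))
    · exact hfst2 c hc c' hc' h
    · exact absurd (hrow2 c hc)
        (by rw [h]; exact (hRowsRemFacts _ (hrow3 c' hc')).2.2)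
    · exact absurd (hrow1 c' hc')
        (by rw [← h]; exact (hRowsRemFacts _ (hrow3 c hc)).2.1)
    · exact absurd (hrow2 c' hc')
        (by rw [← h]; exact (hRowsRemFacts _ (hrow3 c hc)).2.2)
    · exact hfst3 c hc c' hc' h
  have hsndS : ∀ c ∈ S, ∀ c' ∈ S, c.2 = c'.2 → c = c' := by
    intro c hc c' hc' h
    rw [hSmem] at hc hc'
    rcases hc with hc | hc | hc <;> rcases hc' with hc' | hc' | hc'
    · rw [hA1mem] at hc hc'
      have h2 : P c.1 c'.2 = some σ := by rw [← h]; exact hc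
      exact Prod.ext (hP.2 c.1 c'.1 c'.2 σ h2 hc') h
    · have hmc := (hA2facts c' hc').2.2.2.2.1
      have h1 := (hA1mem c).mp hc
      rw [h] at h1
      exact absurd h1 (hmc c.1)
    · have h1 := (hA1mem c).mp hc
      have hj := hColsGeFacts _ (hC3sub (hA3mem c' hc').2)
      rw [h, hnone_col c.1 c'.2 hj] at h1
      exact absurd h1 (by simp)
    · have hmc := (hA2facts c hc).2.2.2.2.1
      have h1 := (hA1mem c').mp hc'
      rw [← h] at h1
      exact absurd h1 (hmc c'.1)
    · exact hBcol c (Finset.mem_sdiff.mp (hA2mem c hc).1).1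
        c' (Finset.mem_sdiff.mp (hA2mem c' hc').1).1 h
    · have h1 := (hA2facts c hc).2.1
      have h2 := hColsGeFacts _ (hC3sub (hA3mem c' hc').2)
      omega
    · have h1 := (hA1mem c').mp hc'
      have hj := hColsGeFacts _ (hC3sub (hA3mem c hc).2)
      rw [← h, hnone_col c'.1 c.2 hj] at h1
      exact absurd h1 (by simp)
    · have h1 := (hA2facts c' hc').2.1
      have h2 := hColsGeFacts _ (hC3sub (hA3mem c hc).2)
      omega
    · exact hsnd3 c hc c' hc' h
  have hSindep : IndepCells S := by
    intro c hc c' hc' hne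
    exact ⟨fun h => hne (hfstS c hc c' hc' h), fun h => hne (hsndS c hc c' hc' h)⟩
  have hSsupp : ∀ c ∈ S, Supports P σ c := by
    intro c hc
    rw [hSmem] at hc
    rcases hc with hc | hc | hc
    · exact Or.inl ((hA1mem c).mp hc)
    · exact (hA2mem c hc).2.2
    · exact hA3supp c hc
  -- cardinality of S
  have hd12 : Disjoint A1 A2 := by
    rw [Finset.disjoint_left]
    intro c hc hc2
    have h1 := (hA1mem c).mp hc
    rw [(hA2facts c hc2).2.2.1] at h1
    exact absurd h1 (by simp)
  have hd13 : Disjoint A1 A3 := by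
    rw [Finset.disjoint_left]
    intro c hc hc3
    have h1 := (hA1mem c).mp hc
    rw [hnone_col c.1 c.2 (hColsGeFacts _ (hC3sub (hA3mem c hc3).2))] at h1
    exact absurd h1 (by simp)
  have hd23 : Disjoint A2 A3 := by
    rw [Finset.disjoint_left]
    intro c hc hc3
    have h1 := (hA2facts c hc).2.1
    have h2 := hColsGeFacts _ (hC3sub (hA3mem c hc3).2)
    omega
  have hScard : S.card = ν + ρ + k := by
    rw [hS, Finset.card_union_of_disjoint (Finset.disjoint_union_left.mpr ⟨hd13, hd23⟩),
      Finset.card_union_of_disjoint hd12, hA1card, hA2card, hA3card]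
  -- now the two bounds
  apply le_antisymm
  · -- upper bound
    rw [alpha]
    apply Finset.sup_le
    intro T hT
    rw [Finset.mem_filter, Finset.mem_powerset] at hT
    obtain ⟨hTsub, hTind, hTsup⟩ := hT
    have hTfst : ∀ c ∈ T, ∀ c' ∈ T, c.1 = c'.1 → c = c' := by
      intro c hc c' hc' h
      by_contra hne
      exact (hTind c hc c' hc' hne).1 h
    have hTsnd : ∀ c ∈ T, ∀ c' ∈ T, c.2 = c'.2 → c = c' := by
      intro c hc c' hc' h
      by_contra hne
      exact (hTind c hc c' hc' hne).2 h
    rw [le_min_iff]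
    constructor
    · -- ≤ r
      calc T.card ≤ RowsLt.card := by
            apply Finset.card_le_card_of_injOn Prod.fst
            · intro c hc
              have h := (Finset.mem_sdiff.mp (hTsub hc)).1
              rw [hRL, Finset.mem_coe, Finset.mem_filter]
              exact ⟨Finset.mem_univ _, (hHmem c).mp h⟩
            · intro c hc c' hc' h
              exact hTfst c (Finset.mem_coe.mp hc) c' (Finset.mem_coe.mp hc') h
        _ = r := hRowsLtcard
    · -- ≤ ν + ρ + (n - s)
      set T1 := T.filter (fun c => P c.1 c.2 = some σ) with hT1
      set T2 := T.filter (fun c => P c.1 c.2 = none ∧ c.2.val < s) with hT2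
      set T3 := T.filter (fun c => s ≤ c.2.val) with hT3
      have hcover : T ⊆ T1 ∪ T2 ∪ T3 := by
        intro c hc
        rw [Finset.mem_union, Finset.mem_union, hT1, hT2, hT3,
          Finset.mem_filter, Finset.mem_filter, Finset.mem_filter]
        by_cases hcol : s ≤ c.2.val
        · exact Or.inr ⟨hc, hcol⟩
        · push_neg at hcol
          rcases hTsup c hc with h | h
          · exact Or.inl (Or.inl ⟨hc, h⟩)
          · exact Or.inl (Or.inr ⟨hc, h.1, hcol⟩)
      have hT1card : T1.card ≤ ν := by
        rw [← hA1card]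
        apply Finset.card_le_card
        intro c hc
        rw [hT1, Finset.mem_filter] at hc
        exact (hA1mem c).mpr hc.2
      have hT2card : T2.card ≤ ρ := by
        rw [← hRows2card]
        apply Finset.card_le_card_of_injOn Prod.fst
        · intro c hc
          rw [hT2, Finset.mem_coe, Finset.mem_filter] at hc
          obtain ⟨hcT, hcnone, hccol⟩ := hc
          have hcHJ := Finset.mem_sdiff.mp (hTsub hcT)
          have hcB : c ∈ B := (hBmem c).mpr ⟨(hHmem c).mp hcHJ.1, hccol, hcnone⟩
          rw [Finset.mem_coe, hRows2mem]
          exact ⟨c, Finset.mem_sdiff.mpr ⟨hcB, hcHJ.2⟩, rfl, hTsup c hcT⟩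
        · intro c hc c' hc' h
          have hc1 := Finset.mem_coe.mp hc
          have hc2 := Finset.mem_coe.mp hc'
          rw [hT2, Finset.mem_filter] at hc1 hc2
          exact hTfst c hc1.1 c' hc2.1 h
      have hT3card : T3.card ≤ n - s := by
        rw [← hColsGecard]
        apply Finset.card_le_card_of_injOn Prod.snd
        · intro c hc
          rw [hT3, Finset.mem_coe, Finset.mem_filter] at hc
          rw [hCG, Finset.mem_coe, Finset.mem_filter]
          exact ⟨Finset.mem_univ _, hc.2⟩
        · intro c hc c' hc' h
          have hc1 := Finset.mem_coe.mp hc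
          have hc2 := Finset.mem_coe.mp hc'
          rw [hT3, Finset.mem_filter] at hc1 hc2
          exact hTsnd c hc1.1 c' hc2.1 h
      calc T.card ≤ (T1 ∪ T2 ∪ T3).card := Finset.card_le_card hcover
        _ ≤ (T1 ∪ T2).card + T3.card := Finset.card_union_le _ _
        _ ≤ T1.card + T2.card + T3.card := by
            exact Nat.add_le_add_right (Finset.card_union_le _ _) _
        _ ≤ ν + ρ + (n - s) := by
            have := hT1card; have := hT2card; have := hT3card; omega
  · -- lower bound
    have hmin : min r (ν + ρ + (n - s)) = ν + ρ + k := by omega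
    rw [hmin, ← hScard, alpha]
    apply Finset.le_sup
    rw [Finset.mem_filter, Finset.mem_powerset]
    exact ⟨hSsub, hSindep, hSsupp⟩
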